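/- For a positive bounded operator P on a finite-dimensional Hilbert space with ‖P‖ < 1, one has ‖2P(I + P²)^{-1}‖ = 2‖P‖/(1 + ‖P‖²), and consequently tanh^{-1}(‖2P(I+P²)^{-1}‖) = 2 tanh^{-1}(‖P‖). -/

import Mathlib

/-- `artanh x = ½ log((1+x)/(1-x))`, the inverse hyperbolic tangent. -/
noncomputable def artanh (x : ℝ) : ℝ := (1 / 2) * Real.log ((1 + x) / (1 - x))

lemma artanh_double {t : ℝ} (ht0 : 0 ≤ t) (ht1 : t < 1) :
    artanh (2 * t / (1 + t ^ 2)) = 2 * artanh t := by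
  have hd : (0:ℝ) < 1 + t ^ 2 := by positivity
  have h1t : (0:ℝ) < 1 - t := by linarith
  have e1 : 1 + 2 * t / (1 + t ^ 2) = (1 + t) ^ 2 / (1 + t ^ 2) := by
    field_simp; ring
  have e2 : 1 - 2 * t / (1 + t ^ 2) = (1 - t) ^ 2 / (1 + t ^ 2) := by
    field_simp; ring
  have key : (1 + 2 * t / (1 + t ^ 2)) / (1 - 2 * t / (1 + t ^ 2))
      = ((1 + t) / (1 - t)) ^ 2 := by
    rw [e1, e2]
    have h1 : (1:ℝ) + t ^ 2 ≠ 0 := ne_of_gt hd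
    have h2 : (1:ℝ) - t ≠ 0 := ne_of_gt h1t
    field_simp
  unfold artanh
  rw [key, Real.log_pow]
  push_cast
  ring

set_option maxHeartbeats 1000000 in
/-- For a positive bounded operator `P` on a finite-dimensional complex
Hilbert space `K` with `‖P‖ < 1` and with `B = (I + P²)⁻¹`, one has
`‖2P(I + P²)⁻¹‖ = 2‖P‖/(1 + ‖P‖²)`, and consequently
`tanh⁻¹ ‖2P(I + P²)⁻¹‖ = 2 tanh⁻¹ ‖P‖`. -/
theorem norm_two_mul_cayley_eq
    {K : Type*} [NormedAddCommGroup K] [InnerProductSpace ℂ K] [CompleteSpace K]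
    [FiniteDimensional ℂ K]
    (P : K →L[ℂ] K) (hP : P.IsPositive) (hPnorm : ‖P‖ < 1)
    (B : K →L[ℂ] K)
    (hB₁ : ((1 : K →L[ℂ] K) + P * P) * B = 1)
    (hB₂ : B * ((1 : K →L[ℂ] K) + P * P) = 1) :
    ‖(2 : ℂ) • (P * B)‖ = 2 * ‖P‖ / (1 + ‖P‖ ^ 2) ∧
    artanh ‖(2 : ℂ) • (P * B)‖ = 2 * artanh ‖P‖ := by
  have hP0 : (0 : K →L[ℂ] K) ≤ P := (ContinuousLinearMap.nonneg_iff_isPositive P).mpr hP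
  have main : ‖(2 : ℂ) • (P * B)‖ = 2 * ‖P‖ / (1 + ‖P‖ ^ 2) := by
    rcases subsingleton_or_nontrivial K with hK | hK
    · have : Subsingleton (K →L[ℂ] K) := ⟨fun f g => by ext x; exact Subsingleton.elim _ _⟩
      have h1 : ‖(2 : ℂ) • (P * B)‖ = 0 := by
        rw [Subsingleton.elim ((2 : ℂ) • (P * B)) 0, norm_zero]
      have h2 : ‖P‖ = 0 := by rw [Subsingleton.elim P 0, norm_zero]
      rw [h1, h2]; norm_num
    · have : Nontrivial (K →L[ℂ] K) := by
        obtain ⟨x, hx⟩ := exists_ne (0 : K)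
        refine ⟨1, 0, fun h => hx ?_⟩
        have := DFunLike.congr_fun h x
        simpa using this
      have hsa : IsSelfAdjoint P := .of_nonneg hP0
      set g : ℝ → ℝ := fun x => 2 * (x * (1 + x ^ 2)⁻¹) with hg
      have hcont : ∀ f : ℝ → ℝ, Continuous f → ContinuousOn f (spectrum ℝ P) :=
        fun f hf => hf.continuousOn
      have hinv_cont : Continuous (fun x : ℝ => (1 + x ^ 2)⁻¹) := by
        apply Continuous.inv₀ (by continuity)
        intro x; positivity
      -- B equals the functional calculus of (1+x²)⁻¹
      have hCmul : ((1 : K →L[ℂ] K) + P * P) * cfc (fun x : ℝ => (1 + x ^ 2)⁻¹) P = 1 := by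
        have h1 : (1 : K →L[ℂ] K) + P * P = cfc (fun x : ℝ => 1 + x ^ 2) P := by
          have : cfc (fun x : ℝ => 1 + x ^ 2) P
              = cfc (fun _ : ℝ => (1:ℝ)) P + cfc (fun x : ℝ => x * x) P := by
            rw [← cfc_add (a := P) (fun _ : ℝ => (1:ℝ)) (fun x => x * x)]
            congr 1; ext x; ring
          rw [this, cfc_const_one ℝ P, cfc_mul (fun x : ℝ => x) (fun x : ℝ => x) P,
            cfc_id' ℝ P]
        rw [h1, ← cfc_mul (fun x : ℝ => 1 + x ^ 2) (fun x : ℝ => (1 + x ^ 2)⁻¹) P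
          (by fun_prop) (hinv_cont.continuousOn)]
        have : (spectrum ℝ P).EqOn (fun x => (1 + x ^ 2) * (1 + x ^ 2)⁻¹) 1 := by
          intro x _
          have : (1 : ℝ) + x ^ 2 ≠ 0 := by positivity
          simp [mul_inv_cancel₀ this]
        rw [cfc_congr this, cfc_one ℝ P]
      have hB : B = cfc (fun x : ℝ => (1 + x ^ 2)⁻¹) P := by
        calc B = B * (((1 : K →L[ℂ] K) + P * P) * cfc (fun x : ℝ => (1 + x ^ 2)⁻¹) P) := by
              rw [hCmul, mul_one]
          _ = (B * ((1 : K →L[ℂ] K) + P * P)) * cfc (fun x : ℝ => (1 + x ^ 2)⁻¹) P := by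
              rw [mul_assoc]
          _ = cfc (fun x : ℝ => (1 + x ^ 2)⁻¹) P := by rw [hB₂, one_mul]
      -- 2 • (P * B) = cfc g P
      have hT : (2 : ℂ) • (P * B) = cfc g P := by
        have hPB : P * B = cfc (fun x : ℝ => x * (1 + x ^ 2)⁻¹) P := by
          rw [hB, cfc_mul (fun x : ℝ => x) (fun x : ℝ => (1 + x ^ 2)⁻¹) P
              (by fun_prop) (hinv_cont.continuousOn), cfc_id' ℝ P]
        have : cfc g P = cfc (fun x : ℝ => x * (1 + x ^ 2)⁻¹) P
            + cfc (fun x : ℝ => x * (1 + x ^ 2)⁻¹) P := by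
          rw [← cfc_add (a := P) _ _ (by fun_prop) (by fun_prop)]
          congr 1; ext x; simp [hg]; ring
        rw [hPB, this, two_smul]
      rw [hT]
      -- spectrum facts
      have hspec_nonneg : ∀ x ∈ spectrum ℝ P, 0 ≤ x := spectrum_nonneg_of_nonneg hP0
      have hspec_le : ∀ x ∈ spectrum ℝ P, x ≤ ‖P‖ := fun x hx =>
        (Real.le_norm_self x).trans (spectrum.norm_le_norm_of_mem hx)
      have hmem : ‖P‖ ∈ spectrum ℝ P := CStarAlgebra.norm_mem_spectrum_of_nonneg hP0
      have hP0' : (0:ℝ) ≤ ‖P‖ := norm_nonneg P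
      have hgmono : ∀ x, 0 ≤ x → x ≤ ‖P‖ → g x ≤ g ‖P‖ := by
        intro x hx hxle
        have hx1 : x < 1 := lt_of_le_of_lt hxle hPnorm
        have h1 : (0:ℝ) < 1 + x ^ 2 := by positivity
        have h2 : (0:ℝ) < 1 + ‖P‖ ^ 2 := by positivity
        simp only [hg, ← div_eq_mul_inv]
        rw [mul_le_mul_iff_right₀ (by norm_num : (0:ℝ) < 2), div_le_div_iff₀ h1 h2]
        have h3 : x * ‖P‖ < 1 := by nlinarith
        nlinarith [mul_nonneg (sub_nonneg.2 hxle) (sub_nonneg.2 h3.le)]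
      have hgcont : ContinuousOn g (spectrum ℝ P) := by fun_prop
      have hub : ‖cfc g P‖ ≤ g ‖P‖ := by
        apply norm_cfc_le
        · show (0:ℝ) ≤ 2 * (‖P‖ * (1 + ‖P‖ ^ 2)⁻¹)
          positivity
        · intro x hx
          have h0 := hspec_nonneg x hx
          rw [Real.norm_eq_abs, abs_of_nonneg (by simp only [hg]; positivity)]
          exact hgmono x h0 (hspec_le x hx)
      have hlb : g ‖P‖ ≤ ‖cfc g P‖ := by
        have := norm_apply_le_norm_cfc g P hmem hgcont hsa
        calc g ‖P‖ ≤ ‖g ‖P‖‖ := Real.le_norm_self _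
          _ ≤ ‖cfc g P‖ := this
      have : ‖cfc g P‖ = g ‖P‖ := le_antisymm hub hlb
      rw [this]
      simp only [hg]
      rw [div_eq_mul_inv]
      ring
  refine ⟨main, ?_⟩
  rw [main]
  exact artanh_double (norm_nonneg P) hPnorm
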